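/- In a graph G = (V, E), any inclusion-minimal edge set J that covers a set family F (i.e., for every A ∈ F some edge of J has exactly one endpoint in A) is a forest (contains no cycle). -/

import Mathlib

/-- An edge set `K` covers a set family `F`: every `A ∈ F` is covered by some
edge of `K` having exactly one endpoint in `A`. -/
def EdgeCovers {V : Type*} (K : Set (Sym2 V)) (F : Set (Set V)) : Prop :=
  ∀ A ∈ F, ∃ e ∈ K, ∃ u v, e = s(u, v) ∧ u ∈ A ∧ v ∉ A

lemma walk_cross {V : Type*} {G : SimpleGraph V} {A : Set V} :
    ∀ {a b : V} (p : G.Walk a b), a ∈ A → b ∉ A →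
      ∃ x y, s(x, y) ∈ p.edges ∧ x ∈ A ∧ y ∉ A := by
  intro a b p
  induction p with
  | nil => intro h h'; exact absurd h h'
  | @cons a c b h p ih =>
    intro ha hb
    by_cases hcA : c ∈ A
    · obtain ⟨x, y, hxy, hx, hy⟩ := ih hcA hb
      exact ⟨x, y, List.mem_cons_of_mem _ hxy, hx, hy⟩
    · exact ⟨a, c, List.mem_cons_self, ha, hcA⟩

theorem stmt_6 {V : Type*} (F : Set (Set V)) (J : Set (Sym2 V))
    (hcov : EdgeCovers J F)
    (hmin : ∀ K ⊂ J, ¬ EdgeCovers K F) :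
    (SimpleGraph.fromEdgeSet J).IsAcyclic := by
  set G := SimpleGraph.fromEdgeSet J with hG
  intro v c hc
  cases c with
  | nil => simp [SimpleGraph.Walk.isCycle_def] at hc
  | @cons _ w _ hadj p =>
    set e : Sym2 V := s(v, w) with he
    have hemem : e ∈ SimpleGraph.Walk.edges (SimpleGraph.Walk.cons hadj p) := List.mem_cons_self
    have hreach : (G \ SimpleGraph.fromEdgeSet {e}).Reachable v w :=
      (SimpleGraph.adj_and_reachable_delete_edges_iff_exists_cycle.2 ⟨v, SimpleGraph.Walk.cons hadj p, hc, hemem⟩).2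
    have heJ : e ∈ J := by
      rw [hG, SimpleGraph.fromEdgeSet_adj] at hadj
      exact hadj.1
    have hvw : v ≠ w := hadj.ne
    have hss : J \ {e} ⊂ J := Set.sdiff_singleton_ssubset.2 heJ
    have hnc := hmin (J \ {e}) hss
    rw [EdgeCovers] at hnc
    push_neg at hnc
    obtain ⟨A, hAF, hA⟩ := hnc
    obtain ⟨f, hfJ, u', v', hfe, hu', hv'⟩ := hcov A hAF
    have hfeq : f = e := by
      by_contra hne
      exact hv' (hA f ⟨hfJ, hne⟩ u' v' hfe hu')
    rw [hfeq, he] at hfe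
    -- s(v,w) = s(u',v')
    have key : ∀ x y : V, x ∈ A → y ∉ A → (G \ SimpleGraph.fromEdgeSet {e}).Reachable x y → False := by
      intro x y hx hy hr
      obtain ⟨q⟩ := hr
      obtain ⟨a, b, hab, haA, hbA⟩ := walk_cross q hx hy
      have hadj' := q.adj_of_mem_edges hab
      have habG : G.Adj a b ∧ ¬ (SimpleGraph.fromEdgeSet {e}).Adj a b := by
        simpa using hadj'
      have habJ : s(a, b) ∈ J := by
        have := habG.1
        rw [hG, SimpleGraph.fromEdgeSet_adj] at this
        exact this.1
      have habne : s(a, b) ≠ e := by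
        intro hh
        apply habG.2
        rw [SimpleGraph.fromEdgeSet_adj]
        exact ⟨by simp [hh], habG.1.ne⟩
      exact hbA (hA _ ⟨habJ, habne⟩ a b rfl haA)
    rw [Sym2.eq_iff] at hfe
    rcases hfe with ⟨h1, h2⟩ | ⟨h1, h2⟩
    · exact key v w (h1 ▸ hu') (h2 ▸ hv') hreach
    · exact key w v (h2 ▸ hu') (h1 ▸ hv') hreach.symm
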